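/- Let (S,∘) be an RC-quasigroup and M its structure monoid. Elements s₁,…,sₙ of S are pairwise distinct if and only if Πₙ(s₁,…,sₙ) is the right-lcm of s₁,…,sₙ in M. In this case, if moreover (S,∘) is bijective, then Πₙ(s₁,…,sₙ) is also the left-lcm (least common left-multiple, i.e., least upper bound for right-divisibility) of the elements s̃₁,…,s̃ₙ defined by s̃ᵢ = Ωₙ(s₁,…,ŝᵢ,…,sₙ,sᵢ). -/

import Mathlib

/-- The right-cyclic law: `(x∘y)∘(x∘z) = (y∘x)∘(y∘z)`. -/
def RCLaw {S : Type*} (op : S → S → S) : Prop :=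
  ∀ x y z : S, op (op x y) (op x z) = op (op y x) (op y z)

/-- The defining relations `s(s∘t) = t(t∘s)`, `s ≠ t`, of the structure monoid, as a relation
on the free monoid over `S`. -/
def rcRel {S : Type*} (op : S → S → S) : FreeMonoid S → FreeMonoid S → Prop :=
  fun a b => ∃ s t : S, s ≠ t ∧
    a = FreeMonoid.of s * FreeMonoid.of (op s t) ∧ b = FreeMonoid.of t * FreeMonoid.of (op t s)

/-- The structure monoid of `(S,∘)`: the monoid presented by generators `S` and relations
`s(s∘t) = t(t∘s)` for `s ≠ t`, realized as the quotient of the free monoid on `S` by the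
congruence generated by these relations. -/
abbrev StructureMonoid {S : Type*} (op : S → S → S) := (conGen (rcRel op)).Quotient

/-- The canonical generator of the structure monoid associated with `s ∈ S`. -/
def smGen {S : Type*} (op : S → S → S) (s : S) : StructureMonoid op :=
  (conGen (rcRel op)).mk' (FreeMonoid.of s)

/-- The monomials `Ωₙ`: `OmegaFin op n x` is `Ω_{n+1}(x₀,…,xₙ)`, defined by `Ω₁(x₁) = x₁` and
`Ωₙ(x₁,…,xₙ) = Ω_{n−1}(x₁,…,x_{n−1}) ∘ Ω_{n−1}(x₁,…,x_{n−2},xₙ)`. -/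
def OmegaFin {S : Type*} (op : S → S → S) : (n : ℕ) → (Fin (n + 1) → S) → S
  | 0, x => x 0
  | n + 1, x =>
      op (OmegaFin op n fun i => x i.castSucc)
         (OmegaFin op n fun i => if (i : ℕ) = n then x (Fin.last (n + 1)) else x i.castSucc)

/-- `Πₙ(x₁,…,xₙ) = ι(Ω₁(x₁))·ι(Ω₂(x₁,x₂))·…·ι(Ωₙ(x₁,…,xₙ))`, computed in the monoid `M`. -/
def PiFin {S M : Type*} [Monoid M] (op : S → S → S) (ι : S → M) (n : ℕ) (x : Fin n → S) : M :=
  ((List.finRange n).map fun i =>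
    ι (OmegaFin op i.val fun j : Fin (i.val + 1) => x (Fin.castLE i.isLt j))).prod


set_option linter.unusedSectionVars false
set_option linter.unusedVariables false

namespace RC9

open List

variable {S : Type*} [DecidableEq S]

/-- Reverse a single letter `s` (left edge) across a word `v` (top edge):
returns the bottom word `s\v` and the right edge `v\s` (length ≤ 1, as an `Option`). -/
def comp1 (θ : S → S → S) : S → List S → List S × Option S
  | s, [] => ([], some s)
  | s, t :: v =>
    if s = t then (v, none)
    else ((θ s t) :: (comp1 θ (θ t s) v).1, (comp1 θ (θ t s) v).2)

/-- `comp1` with an optional left edge. -/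
def comp1' (θ : S → S → S) : Option S → List S → List S × Option S
  | none, v => (v, none)
  | some s, v => comp1 θ s v

/-- Full word reversing: `compW θ u v = (u\v, v\u)`. -/
def compW (θ : S → S → S) : List S → List S → List S × List S
  | [], v => (v, [])
  | s :: u, v =>
    ((compW θ u (comp1 θ s v).1).1,
      (comp1 θ s v).2.toList ++ (compW θ u (comp1 θ s v).1).2)

/-- The complement `u\v` of `u` in `v` : `u * (u\v) ≡ v * (v\u)`. -/
def bs (θ : S → S → S) (u v : List S) : List S := (compW θ u v).1

variable {θ : S → S → S}

@[simp] lemma compW_nil_left (v : List S) : compW θ [] v = (v, []) := rfl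

@[simp] lemma compW_nil_right (u : List S) : compW θ u [] = ([], u) := by
  induction u with
  | nil => rfl
  | cons s u ih => simp [compW, comp1, ih]

@[simp] lemma bs_nil_left (v : List S) : bs θ [] v = v := rfl

@[simp] lemma bs_nil_right (u : List S) : bs θ u [] = [] := by simp [bs]

lemma compW_cons (s : S) (u v : List S) :
    compW θ (s :: u) v =
      ((compW θ u (comp1 θ s v).1).1,
        (comp1 θ s v).2.toList ++ (compW θ u (comp1 θ s v).1).2) := rfl

lemma compW_singleton (s : S) (v : List S) :
    compW θ [s] v = ((comp1 θ s v).1, (comp1 θ s v).2.toList) := by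
  simp [compW]

lemma bs_singleton (s : S) (v : List S) : bs θ [s] v = (comp1 θ s v).1 := by
  simp [bs, compW]

lemma comp1_letter (s t : S) :
    comp1 θ s [t] = if s = t then ([], none) else ([θ s t], some (θ t s)) := by
  by_cases h : s = t <;> simp [comp1, h]

lemma bs_letter (s t : S) : bs θ [s] [t] = if s = t then [] else [θ s t] := by
  by_cases h : s = t <;> simp [bs_singleton, comp1_letter, h]

lemma bs_letter_ne {s t : S} (h : s ≠ t) : bs θ [s] [t] = [θ s t] := by
  simp [bs_letter, h]

lemma comp1_append (s : S) (v₁ v₂ : List S) :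
    comp1 θ s (v₁ ++ v₂) =
      ((comp1 θ s v₁).1 ++ (comp1' θ (comp1 θ s v₁).2 v₂).1,
        (comp1' θ (comp1 θ s v₁).2 v₂).2) := by
  induction v₁ generalizing s with
  | nil => simp [comp1, comp1']
  | cons t v₁ ih =>
    by_cases h : s = t
    · simp [comp1, h, comp1']
    · simp [comp1, h, comp1', ih (θ t s)]

lemma compW_append_left (u₁ u₂ v : List S) :
    compW θ (u₁ ++ u₂) v =
      ((compW θ u₂ (bs θ u₁ v)).1,
        (compW θ u₁ v).2 ++ (compW θ u₂ (bs θ u₁ v)).2) := by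
  induction u₁ generalizing v with
  | nil => simp [bs]
  | cons s u₁ ih =>
    simp only [cons_append, compW_cons, ih (comp1 θ s v).1, bs, append_assoc]

lemma bs_append_left (u₁ u₂ v : List S) :
    bs θ (u₁ ++ u₂) v = bs θ u₂ (bs θ u₁ v) := by
  simp [bs, compW_append_left]

lemma compW_append_right (u v₁ v₂ : List S) :
    compW θ u (v₁ ++ v₂) =
      ((compW θ u v₁).1 ++ (compW θ (compW θ u v₁).2 v₂).1,
        (compW θ (compW θ u v₁).2 v₂).2) := by
  induction u generalizing v₁ v₂ with
  | nil => simp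
  | cons s u ih =>
    rw [compW_cons, comp1_append, compW_cons]
    rcases h1 : comp1 θ s v₁ with ⟨b₁, r₁⟩
    simp only
    cases r₁ with
    | none =>
      simp only [comp1', Option.toList_none, nil_append]
      rw [ih b₁ v₂]
    | some x =>
      simp only [comp1', Option.toList_some, singleton_append]
      rw [ih b₁ (comp1 θ x v₂).1, compW_cons]

lemma exchange_singleton (s : S) (v : List S) :
    compW θ v [s] = ((comp1 θ s v).2.toList, (comp1 θ s v).1) := by
  induction v generalizing s with
  | nil => simp [comp1]
  | cons t v ih =>
    by_cases h : t = s
    · subst h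
      rw [compW_cons, comp1_letter]
      simp [comp1]
    · have h' : ¬ s = t := fun hh => h hh.symm
      rw [compW_cons, comp1_letter]
      simp only [if_neg h, Option.toList_some]
      rw [ih (θ t s)]
      simp [comp1, h']

lemma exchange (u v : List S) : (compW θ u v).2 = (compW θ v u).1 := by
  induction u generalizing v with
  | nil => simp
  | cons s u ih =>
    calc (compW θ (s :: u) v).2
        = (comp1 θ s v).2.toList ++ (compW θ u (comp1 θ s v).1).2 := rfl
      _ = (comp1 θ s v).2.toList ++ (compW θ (comp1 θ s v).1 u).1 := by rw [ih]
      _ = (compW θ v ([s] ++ u)).1 := by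
          rw [compW_append_right, exchange_singleton]

lemma bs_append_right (u v₁ v₂ : List S) :
    bs θ u (v₁ ++ v₂) = bs θ u v₁ ++ bs θ (bs θ v₁ u) v₂ := by
  simp only [bs, compW_append_right, exchange]

@[simp] lemma compW_self (u : List S) : compW θ u u = ([], []) := by
  induction u with
  | nil => rfl
  | cons s u ih => simp [compW_cons, comp1, ih]

@[simp] lemma bs_self (u : List S) : bs θ u u = [] := by simp [bs]

/-- The cube property for the triple `(u, v, w)`. -/
def Chi (θ : S → S → S) (u v w : List S) : Prop :=
  bs θ (bs θ u v) (bs θ u w) = bs θ (bs θ v u) (bs θ v w)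

lemma chi_nil₁ (v w : List S) : Chi θ [] v w := by simp [Chi]

lemma chi_nil₂ (u w : List S) : Chi θ u [] w := by simp [Chi]

lemma chi_nil₃ (u v : List S) : Chi θ u v [] := by simp [Chi]

section Cube

lemma chi_letter (hinj : ∀ s : S, Function.Injective (θ s))
    (hcube : ∀ s t r : S, θ (θ s t) (θ s r) = θ (θ t s) (θ t r))
    (s t r : S) : Chi θ [s] [t] [r] := by
  unfold Chi
  by_cases hst : s = t
  · subst hst; simp
  · by_cases hrs : r = s
    · subst hrs
      simp [bs_letter, hst, Ne.symm hst]
    · by_cases hrt : r = t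
      · subst hrt
        simp [bs_letter, hst, Ne.symm hst]
      · have h1 : θ s t ≠ θ s r := fun h => hrt (hinj s h).symm
        have h2 : θ t s ≠ θ t r := fun h => hrs (hinj t h).symm
        rw [bs_letter_ne hst, bs_letter_ne (Ne.symm hst),
          bs_letter_ne (fun h => hrs h.symm), bs_letter_ne (fun h => hrt h.symm),
          bs_letter_ne h1, bs_letter_ne h2, hcube]

lemma chi_split₃ {u v w₁ w₂ : List S} (h1 : Chi θ u v w₁) (h2 : Chi θ u w₁ v)
    (h3 : Chi θ v w₁ u) (h4 : Chi θ (bs θ w₁ u) (bs θ w₁ v) w₂) :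
    Chi θ u v (w₁ ++ w₂) := by
  unfold Chi at *
  rw [bs_append_right u w₁ w₂, bs_append_right (bs θ u v),
    bs_append_right v w₁ w₂, bs_append_right (bs θ v u), h1, h2, h4, ← h3]

lemma chi_split₂ {u v₁ v₂ w : List S} (h1 : Chi θ u v₁ w)
    (h2 : Chi θ (bs θ v₁ u) v₂ (bs θ v₁ w)) : Chi θ u (v₁ ++ v₂) w := by
  unfold Chi at *
  rw [bs_append_right u v₁ v₂, bs_append_left, bs_append_left v₁ v₂ u,
    bs_append_left v₁ v₂ w, h1, h2]

lemma chi_split₁ {u₁ u₂ v w : List S} (h1 : Chi θ u₁ v w)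
    (h2 : Chi θ u₂ (bs θ u₁ v) (bs θ u₁ w)) : Chi θ (u₁ ++ u₂) v w := by
  unfold Chi at *
  rw [bs_append_left, bs_append_left, bs_append_right v u₁ u₂, bs_append_left, h2, h1]

variable (hinj : ∀ s : S, Function.Injective (θ s))
variable (hcube : ∀ s t r : S, θ (θ s t) (θ s r) = θ (θ t s) (θ t r))

lemma chi_small (hinj : ∀ s : S, Function.Injective (θ s))
    (hcube : ∀ s t r : S, θ (θ s t) (θ s r) = θ (θ t s) (θ t r)) :
    ∀ {u v w : List S}, u.length ≤ 1 → v.length ≤ 1 → w.length ≤ 1 →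
    Chi θ u v w := by
  intro u v w hu hv hw
  match u, hu with
  | [], _ => exact chi_nil₁ v w
  | [a], _ =>
    match v, hv with
    | [], _ => exact chi_nil₂ [a] w
    | [b], _ =>
      match w, hw with
      | [], _ => exact chi_nil₃ [a] [b]
      | [c], _ => exact chi_letter hinj hcube a b c

lemma bs_len1 {u : List S} (c : List S) (hc : c.length ≤ 1) (hu : u.length ≤ 1) :
    (bs θ c u).length ≤ 1 := by
  match c, hc with
  | [], _ => simpa using hu
  | [a], _ =>
    match u, hu with
    | [], _ => simp
    | [b], _ => by_cases h : a = b <;> simp [bs_letter, h]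

lemma chi_len1 (hinj : ∀ s : S, Function.Injective (θ s))
    (hcube : ∀ s t r : S, θ (θ s t) (θ s r) = θ (θ t s) (θ t r)) :
    ∀ (w u v : List S), u.length ≤ 1 → v.length ≤ 1 → Chi θ u v w := by
  intro w
  induction w with
  | nil => intro u v _ _; exact chi_nil₃ u v
  | cons c w₂ ih =>
    intro u v hu hv
    have : c :: w₂ = [c] ++ w₂ := rfl
    rw [this]
    exact chi_split₃ (chi_small hinj hcube hu hv (by simp))
      (chi_small hinj hcube hu (by simp) hv)
      (chi_small hinj hcube hv (by simp) hu)
      (ih _ _ (bs_len1 [c] (by simp) hu) (bs_len1 [c] (by simp) hv))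

lemma chi_len1' (hinj : ∀ s : S, Function.Injective (θ s))
    (hcube : ∀ s t r : S, θ (θ s t) (θ s r) = θ (θ t s) (θ t r)) :
    ∀ (v u w : List S), u.length ≤ 1 → Chi θ u v w := by
  intro v
  induction v with
  | nil => intro u w _; exact chi_nil₂ u w
  | cons c v₂ ih =>
    intro u w hu
    have : c :: v₂ = [c] ++ v₂ := rfl
    rw [this]
    exact chi_split₂ (chi_len1 hinj hcube w u [c] hu (by simp))
      (ih _ _ (bs_len1 [c] (by simp) hu))

lemma chi_all (hinj : ∀ s : S, Function.Injective (θ s))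
    (hcube : ∀ s t r : S, θ (θ s t) (θ s r) = θ (θ t s) (θ t r)) :
    ∀ (u v w : List S), Chi θ u v w := by
  intro u
  induction u with
  | nil => intro v w; exact chi_nil₁ v w
  | cons c u₂ ih =>
    intro v w
    have : c :: u₂ = [c] ++ u₂ := rfl
    rw [this]
    exact chi_split₁ (chi_len1' hinj hcube v [c] w (by simp)) (ih _ _)

end Cube

section Congruence

variable (θ : S → S → S)

/-- The congruence on words generated by the defining relations. -/
def CC (u v : List S) : Prop := conGen (rcRel θ) (FreeMonoid.ofList u) (FreeMonoid.ofList v)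

variable {θ}

lemma cc_refl (u : List S) : CC θ u u := (conGen (rcRel θ)).refl _

lemma cc_symm {u v : List S} (h : CC θ u v) : CC θ v u := (conGen (rcRel θ)).symm h

lemma cc_trans {u v w : List S} (h1 : CC θ u v) (h2 : CC θ v w) : CC θ u w :=
  (conGen (rcRel θ)).trans h1 h2

lemma cc_append {u v u' v' : List S} (h1 : CC θ u v) (h2 : CC θ u' v') :
    CC θ (u ++ u') (v ++ v') := by
  have := (conGen (rcRel θ)).mul h1 h2
  simpa [CC, FreeMonoid.ofList_append] using this

lemma cc_of {s t : S} (h : s ≠ t) : CC θ [s, θ s t] [t, θ t s] :=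
  ConGen.Rel.of _ _ ⟨s, t, h, rfl, rfl⟩

lemma comp1_cons_self (s : S) (v : List S) : comp1 θ s (s :: v) = (v, none) := by
  simp [comp1]

lemma comp1_cons_ne {s t : S} (h : s ≠ t) (v : List S) :
    comp1 θ s (t :: v) = ((θ s t) :: (comp1 θ (θ t s) v).1, (comp1 θ (θ t s) v).2) := by
  simp [comp1, h]

lemma sound1 : ∀ (v : List S) (s : S),
    CC θ (s :: (comp1 θ s v).1) (v ++ (comp1 θ s v).2.toList) := by
  intro v
  induction v with
  | nil => intro s; exact cc_refl [s]
  | cons t v ih =>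
    intro s
    by_cases h : s = t
    · subst h
      rw [comp1_cons_self]
      simp only [Option.toList_none, append_nil]
      exact cc_refl _
    · rw [comp1_cons_ne h]
      simp only
      refine cc_trans (v := t :: θ t s :: (comp1 θ (θ t s) v).1) ?_ ?_
      · exact cc_append (cc_of h) (cc_refl ((comp1 θ (θ t s) v).1))
      · have := cc_append (cc_refl [t]) (ih (θ t s))
        simpa using this

lemma soundW : ∀ (u v : List S), CC θ (u ++ bs θ u v) (v ++ (compW θ u v).2) := by
  intro u
  induction u with
  | nil =>
    intro v
    simp only [bs_nil_left, nil_append, compW_nil_left, append_nil]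
    exact cc_refl v
  | cons s u ih =>
    intro v
    rcases h1 : comp1 θ s v with ⟨b, r⟩
    have step1 : CC θ ((s :: u) ++ bs θ (s :: u) v) (s :: (b ++ (compW θ u b).2)) := by
      have e : (s :: u) ++ bs θ (s :: u) v = s :: (u ++ bs θ u b) := by
        simp [bs, compW_cons, h1]
      rw [e]
      exact cc_append (cc_refl [s]) (ih b)
    have step2 : CC θ (s :: (b ++ (compW θ u b).2)) (v ++ (compW θ (s :: u) v).2) := by
      have h2 : (compW θ (s :: u) v).2 = r.toList ++ (compW θ u b).2 := by
        simp [compW_cons, h1]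
      rw [h2, ← List.append_assoc]
      have e : s :: (b ++ (compW θ u b).2) = (s :: b) ++ (compW θ u b).2 := rfl
      rw [e]
      refine cc_append ?_ (cc_refl _)
      have h3 := sound1 (θ := θ) v s
      rw [h1] at h3
      exact h3
    exact cc_trans step1 step2

lemma bs_rel_pair {s t : S} (hst : s ≠ t) : bs θ [s, θ s t] [t, θ t s] = [] := by
  have e1 : ([s, θ s t] : List S) = [s] ++ [θ s t] := rfl
  have e2 : ([t, θ t s] : List S) = [t] ++ [θ t s] := rfl
  rw [e1, bs_append_left, e2, bs_append_right, bs_letter_ne hst,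
    bs_letter_ne (Ne.symm hst)]
  simp

variable (θ) in
/-- The "reverses to triviality" relation, as a congruence. -/
def PCon (hinj : ∀ s : S, Function.Injective (θ s))
    (hcube : ∀ s t r : S, θ (θ s t) (θ s r) = θ (θ t s) (θ t r)) : Con (FreeMonoid S) where
  r u v := bs θ (FreeMonoid.toList u) (FreeMonoid.toList v) = [] ∧
    bs θ (FreeMonoid.toList v) (FreeMonoid.toList u) = []
  iseqv := by
    constructor
    · intro u; exact ⟨bs_self _, bs_self _⟩
    · intro u v h; exact ⟨h.2, h.1⟩
    · intro u v w h1 h2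
      constructor
      · have hc : Chi θ (FreeMonoid.toList v) (FreeMonoid.toList u) (FreeMonoid.toList w) :=
          chi_all hinj hcube _ _ _
        unfold Chi at hc
        rw [h1.2, h2.1] at hc
        simpa [h1.1] using hc.symm
      · have hc : Chi θ (FreeMonoid.toList v) (FreeMonoid.toList w) (FreeMonoid.toList u) :=
          chi_all hinj hcube _ _ _
        unfold Chi at hc
        rw [h2.1, h1.2] at hc
        simpa [h2.2] using hc.symm
  mul' := by
    intro a b c d h1 h2
    have key : ∀ (x y x' y' : List S), bs θ x y = [] → bs θ y x = [] →
        bs θ x' y' = [] → bs θ (x ++ x') (y ++ y') = [] := by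
      intro x y x' y' hxy hyx hx'y'
      rw [bs_append_left, bs_append_right, hxy, hyx]
      simpa using hx'y'
    exact ⟨key _ _ _ _ h1.1 h1.2 h2.1, key _ _ _ _ h1.2 h1.1 h2.2⟩

lemma cc_reversible (hinj : ∀ s : S, Function.Injective (θ s))
    (hcube : ∀ s t r : S, θ (θ s t) (θ s r) = θ (θ t s) (θ t r))
    {u v : List S} (h : CC θ u v) : bs θ u v = [] ∧ bs θ v u = [] := by
  have hle : conGen (rcRel θ) ≤ PCon θ hinj hcube := by
    apply Con.conGen_le.2
    rintro a b ⟨s, t, hst, rfl, rfl⟩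
    exact ⟨bs_rel_pair hst, bs_rel_pair (Ne.symm hst)⟩
  exact hle h

/-- Word length is invariant under the congruence. -/
lemma cc_length {u v : List S} (h : CC θ u v) : u.length = v.length := by
  have hle : conGen (rcRel θ) ≤
      { r := fun a b => (FreeMonoid.toList a).length = (FreeMonoid.toList b).length
        iseqv := ⟨fun _ => rfl, Eq.symm, Eq.trans⟩
        mul' := by
          intro a b c d h1 h2
          have h1' : (FreeMonoid.toList a).length = (FreeMonoid.toList b).length := h1
          have h2' : (FreeMonoid.toList c).length = (FreeMonoid.toList d).length := h2
          show (FreeMonoid.toList (a * c)).length = (FreeMonoid.toList (b * d)).length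
          simp only [FreeMonoid.toList_mul, List.length_append, h1', h2'] } := by
    apply Con.conGen_le.2
    rintro a b ⟨s, t, hst, rfl, rfl⟩
    rfl
  exact hle h

section Dvd

variable (θ) in
/-- The class of a word in the structure monoid. -/
def mkw (u : List S) : (conGen (rcRel θ)).Quotient :=
  (conGen (rcRel θ)).mk' (FreeMonoid.ofList u)

lemma mkw_mul (u v : List S) : mkw θ u * mkw θ v = mkw θ (u ++ v) := by
  simp [mkw, FreeMonoid.ofList_append]

lemma mkw_surjective (m : (conGen (rcRel θ)).Quotient) : ∃ u, m = mkw θ u := by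
  obtain ⟨w, rfl⟩ := Con.mk'_surjective (c := conGen (rcRel θ)) m
  exact ⟨FreeMonoid.toList w, rfl⟩

lemma mkw_eq_iff {u v : List S} : mkw θ u = mkw θ v ↔ CC θ u v := by
  constructor
  · intro h
    exact Con.eq _ |>.1 h
  · intro h
    exact Con.eq _ |>.2 h

lemma dvd_iff (hinj : ∀ s : S, Function.Injective (θ s))
    (hcube : ∀ s t r : S, θ (θ s t) (θ s r) = θ (θ t s) (θ t r)) (u v : List S) :
    mkw θ u ∣ mkw θ v ↔ bs θ v u = [] := by
  constructor
  · rintro ⟨c, hc⟩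
    obtain ⟨w, rfl⟩ := mkw_surjective c
    rw [mkw_mul, mkw_eq_iff] at hc
    have := (cc_reversible hinj hcube hc).1
    rw [bs_append_right] at this
    exact (List.append_eq_nil_iff.1 this).1
  · intro h
    refine ⟨mkw θ (bs θ u v), ?_⟩
    rw [mkw_mul, mkw_eq_iff]
    have h3 := soundW (θ := θ) u v
    rw [exchange, show (compW θ v u).1 = bs θ v u from rfl, h, List.append_nil] at h3
    exact cc_symm h3

lemma lcm_dvd_aux (hinj : ∀ s : S, Function.Injective (θ s))
    (hcube : ∀ s t r : S, θ (θ s t) (θ s r) = θ (θ t s) (θ t r)) (k u v : List S)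
    (hu : bs θ k u = []) (hv : bs θ k v = []) : bs θ k (u ++ bs θ u v) = [] := by
  rw [bs_append_right]
  have hc : Chi θ u k v := chi_all hinj hcube u k v
  unfold Chi at hc
  rw [hu, hv] at hc
  simp only [bs_nil_left] at hc
  rw [hu, hc]
  simp

lemma dvd_of_dvd_length_eq (hinj : ∀ s : S, Function.Injective (θ s))
    (hcube : ∀ s t r : S, θ (θ s t) (θ s r) = θ (θ t s) (θ t r)) {u v : List S}
    (h : mkw θ u ∣ mkw θ v) (hlen : u.length = v.length) : mkw θ u = mkw θ v := by
  obtain ⟨c, hc⟩ := h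
  obtain ⟨w, rfl⟩ := mkw_surjective c
  rw [mkw_mul] at hc
  have hl := cc_length (mkw_eq_iff.1 hc)
  rw [List.length_append] at hl
  have : w = [] := List.eq_nil_of_length_eq_zero (by omega)
  subst this
  rw [hc, List.append_nil]

end Dvd

end Congruence
section OpSide

variable {op : S → S → S}

/-- `Vop r t = Ω(reverse r, t)` : the monomial `Ω` with prefix arguments given by the
reversed list `r` and last argument `t`. -/
def Vop (op : S → S → S) : List S → S → S
  | [], t => t
  | a :: r, t => op (Vop op r a) (Vop op r t)

/-- The word `Ω₁(..) Ω₂(..) … Ωₙ(..)` of the monomial `Πₙ`, where the arguments are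
given as the *reversed* list `r`. -/
def PiWr (op : S → S → S) : List S → List S
  | [] => []
  | a :: r => PiWr op r ++ [Vop op r a]

@[simp] lemma PiWr_length (r : List S) : (PiWr op r).length = r.length := by
  induction r with
  | nil => rfl
  | cons a r ih => simp [PiWr, ih]

lemma Vop_injective (hlb : ∀ s : S, Function.Bijective (op s)) (r : List S) :
    Function.Injective (Vop op r) := by
  induction r with
  | nil => exact fun a b h => h
  | cons a r ih =>
    intro x y h
    exact ih ((hlb (Vop op r a)).1 h)

lemma Vop_perm (hRC : RCLaw op) {r r' : List S} (h : r.Perm r') (t : S) :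
    Vop op r t = Vop op r' t := by
  induction h generalizing t with
  | nil => rfl
  | cons a h ih => simp only [Vop, ih]
  | swap a b l =>
    simp only [Vop]
    exact hRC (Vop op l a) (Vop op l b) (Vop op l t)
  | trans h1 h2 ih1 ih2 => exact (ih1 t).trans (ih2 t)

section WithLaws

variable (hRC : RCLaw op) (hlb : ∀ s : S, Function.Bijective (op s))

include hRC hlb

omit hRC in
private lemma hinj' : ∀ s : S, Function.Injective (op s) := fun s => (hlb s).1

omit hlb in
private lemma hcube' : ∀ s t r : S, op (op s t) (op s r) = op (op t s) (op t r) :=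
  fun s t r => hRC s t r

omit hRC in
lemma bs_PiWr : ∀ (r : List S) (t : S), t ∉ r → bs op (PiWr op r) [t] = [Vop op r t] := by
  intro r
  induction r with
  | nil => intro t _; rfl
  | cons a r ih =>
    intro t ht
    have hta : t ≠ a := fun h => ht (List.mem_cons.2 (Or.inl h))
    have htr : t ∉ r := fun h => ht (List.mem_cons_of_mem a h)
    rw [PiWr, bs_append_left, ih t htr]
    have hne : Vop op r a ≠ Vop op r t := fun h => hta (Vop_injective hlb r h).symm
    rw [bs_letter_ne hne]
    rfl

lemma mem_dvd_PiWr : ∀ (r : List S), r.Nodup → ∀ x ∈ r,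
    mkw op [x] ∣ mkw op (PiWr op r) := by
  intro r
  induction r with
  | nil => intro _ x hx; cases hx
  | cons a r ih =>
    intro hnd x hx
    have hnr : r.Nodup := (List.nodup_cons.1 hnd).2
    have har : a ∉ r := (List.nodup_cons.1 hnd).1
    rcases List.mem_cons.1 hx with rfl | hxr
    · rw [dvd_iff (hinj' hlb) (hcube' hRC)]
      rw [PiWr, bs_append_left, bs_PiWr hlb r x har]
      simp
    · exact dvd_trans (ih hnr x hxr) ⟨mkw op [Vop op r a], by rw [mkw_mul]; rfl⟩

lemma PiWr_lub : ∀ (r : List S), r.Nodup → ∀ (k : List S),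
    (∀ x ∈ r, bs op k [x] = []) → bs op k (PiWr op r) = [] := by
  intro r
  induction r with
  | nil => intro _ k _; simp [PiWr]
  | cons a r ih =>
    intro hnd k hk
    have hnr : r.Nodup := (List.nodup_cons.1 hnd).2
    have har : a ∉ r := (List.nodup_cons.1 hnd).1
    rw [PiWr, ← bs_PiWr hlb r a har]
    exact lcm_dvd_aux (hinj' hlb) (hcube' hRC) k (PiWr op r) [a]
      (ih hnr k (fun x hx => hk x (List.mem_cons_of_mem a hx)))
      (hk a List.mem_cons_self)

lemma PiWr_dvd_of_mem_dvd (r : List S) (hnd : r.Nodup) (k : List S)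
    (hk : ∀ x ∈ r, mkw op [x] ∣ mkw op k) : mkw op (PiWr op r) ∣ mkw op k := by
  rw [dvd_iff (hinj' hlb) (hcube' hRC)]
  exact PiWr_lub hRC hlb r hnd k
    (fun x hx => (dvd_iff (hinj' hlb) (hcube' hRC) [x] k).1 (hk x hx))

lemma PiWr_perm (r r' : List S) (h : r.Perm r') (hnd : r.Nodup) :
    mkw op (PiWr op r) = mkw op (PiWr op r') := by
  have hnd' : r'.Nodup := h.nodup_iff.1 hnd
  have h1 : mkw op (PiWr op r) ∣ mkw op (PiWr op r') :=
    PiWr_dvd_of_mem_dvd hRC hlb r hnd _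
      (fun x hx => mem_dvd_PiWr hRC hlb r' hnd' x (h.mem_iff.1 hx))
  exact dvd_of_dvd_length_eq (hinj' hlb) (hcube' hRC) h1
    (by simp [h.length_eq])

end WithLaws

end OpSide
section Bijective

variable {op : S → S → S}

section ThetaPrime

variable (hRC : RCLaw op) (hlb : ∀ s : S, Function.Bijective (op s))
variable (hbij : Function.Bijective (fun p : S × S => (op p.1 p.2, op p.2 p.1)))

include hbij

/-- The inverse of the Yang–Baxter-type map `(s,t) ↦ (s∘t, t∘s)`. -/
noncomputable def PhiE (hbij : Function.Bijective (fun p : S × S => (op p.1 p.2, op p.2 p.1))) :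
    S × S ≃ S × S := Equiv.ofBijective _ hbij

/-- The opposite complement. -/
noncomputable def thop (hbij : Function.Bijective (fun p : S × S => (op p.1 p.2, op p.2 p.1)))
    (a b : S) : S := ((PhiE hbij).symm (a, b)).1

lemma PhiE_apply (s t : S) : PhiE hbij (s, t) = (op s t, op t s) := rfl

lemma PhiE_symm_apply (s t : S) : (PhiE hbij).symm (op s t, op t s) = (s, t) := by
  rw [← PhiE_apply hbij, Equiv.symm_apply_apply]

lemma thop_op (s t : S) : thop hbij (op s t) (op t s) = s := by
  simp [thop, PhiE_symm_apply]

/-- In the bijective case, `s ≠ t → s∘t ≠ t∘s`. -/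
lemma op_ne_op {s t : S} (h : s ≠ t) : op s t ≠ op t s := by
  intro heq
  have h1 : PhiE hbij (s, t) = PhiE hbij (t, s) := by
    rw [PhiE_apply, PhiE_apply, heq]
  have := (PhiE hbij).injective h1
  exact h (congrArg Prod.fst this)

lemma thop_spec (a b : S) :
    a = op (thop hbij a b) ((PhiE hbij).symm (a, b)).2 ∧
    b = op ((PhiE hbij).symm (a, b)).2 (thop hbij a b) := by
  have h := (PhiE hbij).apply_symm_apply (a, b)
  rcases he : (PhiE hbij).symm (a, b) with ⟨s, t⟩
  rw [he] at h
  rw [PhiE_apply] at h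
  constructor
  · simpa [thop, he] using (congrArg Prod.fst h).symm
  · simpa [thop, he] using (congrArg Prod.snd h).symm

include hlb in
lemma thop_inj (a : S) : Function.Injective (thop hbij a) := by
  intro b b' h
  rcases he : (PhiE hbij).symm (a, b) with ⟨s, t⟩
  rcases he' : (PhiE hbij).symm (a, b') with ⟨s', t'⟩
  have hs : s = s' := by
    have h1 : thop hbij a b = s := by simp [thop, he]
    have h2 : thop hbij a b' = s' := by simp [thop, he']
    rw [h1, h2] at h; exact h
  subst hs
  have hab : (a, b) = PhiE hbij (s, t) := by rw [← he, Equiv.apply_symm_apply]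
  have hab' : (a, b') = PhiE hbij (s, t') := by rw [← he', Equiv.apply_symm_apply]
  rw [PhiE_apply] at hab hab'
  have ha : op s t = op s t' := by
    have e1 := congrArg Prod.fst hab
    have e2 := congrArg Prod.fst hab'
    simp only at e1 e2
    rw [← e1, ← e2]
  have : t = t' := (hlb s).1 ha
  subst this
  exact (congrArg Prod.snd hab).trans (congrArg Prod.snd hab').symm

include hRC hlb in
lemma thop_cube (a b c : S) :
    thop hbij (thop hbij a b) (thop hbij a c) = thop hbij (thop hbij b a) (thop hbij b c) := by
  rcases hab : (PhiE hbij).symm (a, b) with ⟨s, t⟩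
  rcases hac : (PhiE hbij).symm (a, c) with ⟨p, q⟩
  rcases hbc : (PhiE hbij).symm (b, c) with ⟨u, v⟩
  have Hab := (PhiE hbij).apply_symm_apply (a, b); rw [hab, PhiE_apply] at Hab
  have Hac := (PhiE hbij).apply_symm_apply (a, c); rw [hac, PhiE_apply] at Hac
  have Hbc := (PhiE hbij).apply_symm_apply (b, c); rw [hbc, PhiE_apply] at Hbc
  obtain ⟨ha1, hb1⟩ : op s t = a ∧ op t s = b := ⟨congrArg Prod.fst Hab, congrArg Prod.snd Hab⟩
  obtain ⟨ha2, hc1⟩ : op p q = a ∧ op q p = c := ⟨congrArg Prod.fst Hac, congrArg Prod.snd Hac⟩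
  obtain ⟨hb2, hc2⟩ : op u v = b ∧ op v u = c := ⟨congrArg Prod.fst Hbc, congrArg Prod.snd Hbc⟩
  have hth_ab : thop hbij a b = s := by simp [thop, hab]
  have hth_ba : thop hbij b a = t := by
    have : (PhiE hbij).symm (b, a) = (t, s) := by
      rw [← hb1, ← ha1]; exact PhiE_symm_apply hbij t s
    simp [thop, this]
  have hth_ac : thop hbij a c = p := by simp [thop, hac]
  have hth_bc : thop hbij b c = u := by simp [thop, hbc]
  rw [hth_ab, hth_ba, hth_ac, hth_bc]
  -- now show thop s p = thop t u
  rcases hsp : (PhiE hbij).symm (s, p) with ⟨x, y⟩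
  have Hsp := (PhiE hbij).apply_symm_apply (s, p); rw [hsp, PhiE_apply] at Hsp
  obtain ⟨hs1, hp1⟩ : op x y = s ∧ op y x = p := ⟨congrArg Prod.fst Hsp, congrArg Prod.snd Hsp⟩
  obtain ⟨w, hw⟩ := (hlb x).2 t
  -- q = op y w
  have hq : q = op y w := by
    have h1 : op (op x y) (op x w) = op (op y x) (op y w) := hRC x y w
    rw [hs1, hw] at h1
    -- h1 : op s t = op (op y x) (op y w), and op s t = a = op p q = op (op y x) q
    have h2 : op (op y x) q = op (op y x) (op y w) := by
      rw [hp1] at h1 ⊢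
      rw [← h1, ha1, ← ha2]
    exact (hlb (op y x)).1 h2
  -- u = op w x, v = op w y
  have hbu : b = op (op w x) (op w y) := by
    have h1 : op (op x w) (op x y) = op (op w x) (op w y) := hRC x w y
    rw [hw, hs1] at h1
    rw [← hb1, ← h1]
  have hcu : c = op (op w y) (op w x) := by
    have h1 : op (op y w) (op y x) = op (op w y) (op w x) := hRC y w x
    rw [← hq, hp1] at h1
    rw [← hc1, ← h1]
  have huv : (u, v) = (op w x, op w y) := by
    have e1 : (PhiE hbij).symm (b, c) = (u, v) := hbc
    have e2 : (PhiE hbij).symm (b, c) = (op w x, op w y) := by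
      rw [hbu, hcu]
      exact PhiE_symm_apply hbij (op w x) (op w y)
    rw [← e1, e2]
  have hu : u = op w x := congrArg Prod.fst huv
  -- thop s p = x
  have hL : thop hbij s p = x := by simp [thop, hsp]
  -- thop t u : PhiE (x, w) = (op x w, op w x) = (t, u)
  have hR : thop hbij t u = x := by
    have : (PhiE hbij).symm (t, u) = (x, w) := by
      rw [← hw, hu]
      exact PhiE_symm_apply hbij x w
    simp [thop, this]
  rw [hL, hR]

end ThetaPrime

end Bijective
section Transport

variable {op : S → S → S}
variable (hRC : RCLaw op) (hlb : ∀ s : S, Function.Bijective (op s))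
variable (hbij : Function.Bijective (fun p : S × S => (op p.1 p.2, op p.2 p.1)))

include hbij in
lemma cc_rev_mp {u v : List S} (h : CC op u v) :
    CC (thop hbij) u.reverse v.reverse := by
  let c₂ : Con (FreeMonoid S) :=
    { r := fun a b => CC (thop hbij) (FreeMonoid.toList a).reverse (FreeMonoid.toList b).reverse
      iseqv := ⟨fun _ => cc_refl _, cc_symm, cc_trans⟩
      mul' := by
        intro a b c d h1 h2
        have := cc_append h2 h1
        show CC (thop hbij) (FreeMonoid.toList (a * c)).reverse
          (FreeMonoid.toList (b * d)).reverse
        simpa [FreeMonoid.toList_mul, List.reverse_append] using this }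
  have hle : conGen (rcRel op) ≤ c₂ := by
    apply Con.conGen_le.2
    rintro a b ⟨s, t, hst, rfl, rfl⟩
    show CC (thop hbij) [op s t, s] [op t s, t]
    have h1 : thop hbij (op s t) (op t s) = s := thop_op hbij s t
    have h2 : thop hbij (op t s) (op s t) = t := thop_op hbij t s
    have := cc_of (θ := thop hbij) (op_ne_op hbij hst)
    rw [h1, h2] at this
    exact this
  exact hle h

include hbij in
lemma cc_rev_mpr {u v : List S} (h : CC (thop hbij) u v) :
    CC op u.reverse v.reverse := by
  let c₂ : Con (FreeMonoid S) :=
    { r := fun a b => CC op (FreeMonoid.toList a).reverse (FreeMonoid.toList b).reverse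
      iseqv := ⟨fun _ => cc_refl _, cc_symm, cc_trans⟩
      mul' := by
        intro a b c d h1 h2
        have := cc_append h2 h1
        show CC op (FreeMonoid.toList (a * c)).reverse (FreeMonoid.toList (b * d)).reverse
        simpa [FreeMonoid.toList_mul, List.reverse_append] using this }
  have hle : conGen (rcRel (thop hbij)) ≤ c₂ := by
    apply Con.conGen_le.2
    rintro a b ⟨a', b', hab, rfl, rfl⟩
    show CC op [thop hbij a' b', a'] [thop hbij b' a', b']
    rcases he : (PhiE hbij).symm (a', b') with ⟨s, t⟩
    have H := (PhiE hbij).apply_symm_apply (a', b')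
    rw [he, PhiE_apply] at H
    have ha' : a' = op s t := (congrArg Prod.fst H).symm
    have hb' : b' = op t s := (congrArg Prod.snd H).symm
    have hst : s ≠ t := by
      rintro rfl
      exact hab (ha'.trans hb'.symm)
    have h1 : thop hbij a' b' = s := by rw [ha', hb']; exact thop_op hbij s t
    have h2 : thop hbij b' a' = t := by rw [ha', hb']; exact thop_op hbij t s
    rw [h1, h2, ha', hb']
    exact cc_of hst
  exact hle h

include hbij in
lemma cc_rev_iff {u v : List S} : CC op u v ↔ CC (thop hbij) u.reverse v.reverse := by
  constructor
  · exact cc_rev_mp hbij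
  · intro h
    have := cc_rev_mpr hbij h
    simpa using this

include hRC hlb hbij in
/-- Key induction for the left-lcm: the reversed `Π` word is a right-lcm of the
`s̃`-letters in the opposite structure monoid. -/
lemma lemB2 : ∀ (r : List S), r.Nodup → ∀ (K : List S),
    (∀ (r₁ : List S) (x : S) (r₂ : List S), r = r₁ ++ x :: r₂ →
      bs (thop hbij) K [Vop op (r₁ ++ r₂) x] = []) →
    bs (thop hbij) K (PiWr op r).reverse = [] := by
  intro r
  induction r with
  | nil => intro _ K _; simp [PiWr]
  | cons a r ih =>
    intro hnd K hK
    have hnr : r.Nodup := (List.nodup_cons.1 hnd).2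
    have har : a ∉ r := (List.nodup_cons.1 hnd).1
    have hrev : (PiWr op (a :: r)).reverse = [Vop op r a] ++ (PiWr op r).reverse := by
      rw [PiWr, List.reverse_append]
      rfl
    rw [hrev, bs_append_right]
    set p := Vop op r a with hp_def
    have hp : bs (thop hbij) K [p] = [] := by
      have := hK [] a r rfl
      simpa using this
    rw [hp]
    simp only [List.nil_append, bs_nil_left]
    apply ih hnr
    intro r₁ x r₂ hr
    have hxr : x ∈ r := by rw [hr]; exact List.mem_append_right _ List.mem_cons_self
    set tx := Vop op (r₁ ++ r₂) x with htx_def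
    set y' := Vop op (r₁ ++ r₂) a with hy'_def
    have hq : bs (thop hbij) K [Vop op (a :: (r₁ ++ r₂)) x] = [] := by
      have := hK (a :: r₁) x r₂ (by rw [hr]; rfl)
      simpa using this
    set q := Vop op (a :: (r₁ ++ r₂)) x with hq_def
    have hq_eq : q = op y' tx := rfl
    have hp_eq : p = op tx y' := by
      rw [hp_def]
      have hperm : r.Perm (x :: (r₁ ++ r₂)) := by
        rw [hr]; exact List.perm_middle
      rw [Vop_perm hRC hperm a]
      rfl
    have htxy : tx ≠ y' := by
      intro h
      exact har (Vop_injective hlb (r₁ ++ r₂) h ▸ hxr)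
    have hpq : p ≠ q := by
      rw [hp_eq, hq_eq]
      exact op_ne_op hbij htxy
    have hθ : thop hbij p q = tx := by
      rw [hp_eq, hq_eq]
      exact thop_op hbij tx y'
    have hco : bs (thop hbij) [p] [q] = [tx] := by rw [bs_letter_ne hpq, hθ]
    have hc : Chi (thop hbij) [p] K [q] :=
      chi_all (thop_inj hlb hbij) (thop_cube hRC hlb hbij) [p] K [q]
    unfold Chi at hc
    rw [hco, hp, hq] at hc
    simpa using hc
end Transport
section FinBridge

variable {op : S → S → S}

lemma smGen_eq_mkw (x : S) : smGen op x = mkw op [x] := rfl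

lemma prod_map_mkw {A : Type*} (l : List A) (g : A → S) :
    (l.map fun a => mkw op [g a]).prod = mkw op (l.map g) := by
  induction l with
  | nil => exact (map_one (conGen (rcRel op)).mk').symm
  | cons a l ih =>
    simp only [List.map_cons, List.prod_cons, ih, mkw_mul]
    rfl

lemma OmegaFin_eq_Vop (op : S → S → S) : ∀ (n : ℕ) (x : Fin (n + 1) → S),
    OmegaFin op n x =
      Vop op (((List.finRange n).map (fun j => x j.castSucc)).reverse) (x (Fin.last n)) := by
  intro n
  induction n with
  | zero => intro x; rfl
  | succ n ih =>
    intro x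
    rw [List.finRange_succ_last, List.map_append, List.map_map, List.reverse_append]
    simp only [List.map_cons, List.map_nil, List.reverse_cons, List.reverse_nil,
      List.nil_append, List.singleton_append, Function.comp]
    show OmegaFin op (n+1) x =
      op (Vop op _ (x ((Fin.last n).castSucc))) (Vop op _ (x (Fin.last (n+1))))
    rw [OmegaFin]
    congr 1
    · rw [ih (fun i : Fin (n + 1) => x i.castSucc)]
      rfl
    · rw [ih (fun i : Fin (n + 1) =>
        if (i : ℕ) = n then x (Fin.last (n + 1)) else x i.castSucc)]
      have hmap : (List.finRange n).map
            (fun j : Fin n => if ((j.castSucc : Fin (n+1)) : ℕ) = n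
              then x (Fin.last (n + 1)) else x j.castSucc.castSucc) =
          (List.finRange n).map (fun j : Fin n => x j.castSucc.castSucc) := by
        apply List.map_congr_left
        intro j _
        have hj : ((j.castSucc : Fin (n+1)) : ℕ) ≠ n := by
          simp only [Fin.coe_castSucc]
          omega
        rw [if_neg hj]
      rw [hmap]
      simp only [Fin.val_last, if_pos]
      rfl

lemma tilde_eq_Vop {n : ℕ} (s : Fin (n + 1) → S) (i : Fin (n + 1)) :
    OmegaFin op n (Fin.snoc (fun m : Fin n => s (i.succAbove m)) (s i)) =
      Vop op (((List.finRange n).map (fun m => s (i.succAbove m))).reverse) (s i) := by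
  rw [OmegaFin_eq_Vop]
  congr 1
  · congr 1
    apply List.map_congr_left
    intro j _
    exact Fin.snoc_castSucc _ _ j
  · exact Fin.snoc_last _ _

lemma PiFin_word (op : S → S → S) : ∀ (n : ℕ) (s : Fin (n + 1) → S),
    (List.finRange (n + 1)).map
        (fun i => OmegaFin op i.val fun j : Fin (i.val + 1) => s (Fin.castLE i.isLt j)) =
      PiWr op (((List.finRange (n + 1)).map s).reverse) := by
  intro n
  induction n with
  | zero =>
    intro s
    show [OmegaFin op 0 _] = PiWr op [s 0]
    show [s _] = [] ++ [Vop op [] (s 0)]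
    simp only [List.nil_append, Vop]
    exact congrArg (fun y => [y]) (congrArg s (Fin.ext rfl))
  | succ n ih =>
    intro s
    rw [List.finRange_succ_last, List.map_append, List.map_append, List.map_map,
      List.reverse_append]
    simp only [List.map_cons, List.map_nil, List.reverse_cons, List.reverse_nil,
      List.nil_append, List.singleton_append, List.map_map]
    rw [PiWr]
    have hcomp : s ∘ Fin.castSucc = (fun m : Fin (n+1) => s m.castSucc) := rfl
    rw [hcomp]
    congr 1
    · have hih := ih (fun m : Fin (n + 1) => s m.castSucc)
      rw [← hih]
      apply List.map_congr_left
      intro i _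
      show OmegaFin op ((i : Fin (n+1)).castSucc).val _ = OmegaFin op i.val _
      apply congrArg
      funext j
      exact congrArg s (Fin.ext rfl)
    · apply congrArg (fun y => [y])
      have h1 : (fun j : Fin (n + 2) => s (Fin.castLE (Fin.last (n+1)).isLt j)) = s := by
        funext j
        exact congrArg s (Fin.ext rfl)
      show OmegaFin op (Fin.last (n+1)).val
          (fun j => s (Fin.castLE (Fin.last (n+1)).isLt j)) = _
      have h2 : OmegaFin op (Fin.last (n+1)).val
          (fun j => s (Fin.castLE (Fin.last (n+1)).isLt j)) = OmegaFin op (n+1) s :=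
        congrArg (OmegaFin op (n+1)) (funext fun j => congrArg s (Fin.ext rfl))
      rw [h2, OmegaFin_eq_Vop op (n + 1) s]

lemma args_decomp {n : ℕ} (s : Fin (n + 1) → S) (i : Fin (n + 1)) :
    (List.finRange (n + 1)).map s =
      (((List.finRange n).map (fun m => s (i.succAbove m))).take i.val) ++ s i ::
        (((List.finRange n).map (fun m => s (i.succAbove m))).drop i.val) := by
  classical
  set E := (List.finRange n).map (fun m => s (i.succAbove m)) with hE_def
  have hE : E.length = n := by simp [hE_def]
  have hi : i.val ≤ n := Nat.lt_succ_iff.1 i.isLt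
  have htake : (E.take i.val).length = i.val := by
    rw [List.length_take, hE]
    omega
  apply List.ext_getElem
  · simp only [List.length_map, List.length_finRange, List.length_append, htake,
      List.length_cons, List.length_drop, hE]
    omega
  · intro k hk1 hk2
    have hk : k < n + 1 := by
      rw [List.length_map, List.length_finRange] at hk1
      exact hk1
    have hLHS : ((List.finRange (n + 1)).map s)[k] = s ⟨k, hk⟩ := by
      rw [List.getElem_map, List.getElem_finRange]
      exact congrArg s (Fin.ext rfl)
    rw [hLHS]
    have hval : ∀ (m : Fin n), ((i.succAbove m : Fin (n+1)) : ℕ) =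
        if (m : ℕ) < i.val then (m : ℕ) else (m : ℕ) + 1 := by
      intro m
      by_cases hm : (m : ℕ) < i.val
      · rw [if_pos hm, Fin.succAbove_of_castSucc_lt i m (by simpa [Fin.lt_def] using hm)]
        rfl
      · rw [if_neg hm, Fin.succAbove_of_le_castSucc i m
          (by simp only [Fin.le_def, Fin.coe_castSucc]; omega)]
        rfl
    by_cases hki : k < i.val
    · have hklt : k < (E.take i.val).length := by omega
      rw [List.getElem_append_left hklt]
      have hkE : k < E.length := by omega
      rw [List.getElem_take, List.getElem_map, List.getElem_finRange]
      apply congrArg s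
      apply Fin.ext
      rw [hval]
      simp only [Fin.coe_cast]
      rw [if_pos (by omega)]
    · have hge : (E.take i.val).length ≤ k := by omega
      rw [List.getElem_append_right hge]
      have hbound : k - (E.take i.val).length < (s i :: E.drop i.val).length := by
        simp only [List.length_cons, List.length_drop]
        omega
      rw [List.getElem_cons]
      rcases Nat.lt_or_ge i.val k with hik | hik
      · have hne : ¬ (k - (E.take i.val).length = 0) := by omega
        rw [dif_neg hne]
        have hidx : k - (E.take i.val).length - 1 < (E.drop i.val).length := by
          simp only [List.length_drop]
          omega
        rw [List.getElem_drop]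
        have hEidx : i.val + (k - (E.take i.val).length - 1) < E.length := by omega
        rw [List.getElem_map, List.getElem_finRange]
        apply congrArg s
        apply Fin.ext
        rw [hval]
        simp only [Fin.coe_cast]
        rw [if_neg (by omega)]
        omega
      · have hkeq : k - (E.take i.val).length = 0 := by omega
        rw [dif_pos hkeq]
        exact congrArg s (Fin.ext (by simp; omega))

end FinBridge

end RC9

/-- In the structure monoid `M` of an RC-quasigroup `(S,∘)`, elements
`s₁,…,sₙ` of `S` are pairwise distinct iff `Πₙ(s₁,…,sₙ)` is the right-lcm of `s₁,…,sₙ`;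
and if moreover `(S,∘)` is bijective and the `sᵢ` are pairwise distinct, then `Πₙ(s₁,…,sₙ)`
is the left-lcm of the elements `s̃ᵢ = Ωₙ(s₁,…,ŝᵢ,…,sₙ,sᵢ)`. -/
theorem statement9 {S : Type*} (op : S → S → S)
    (hRC : RCLaw op) (hlb : ∀ s : S, Function.Bijective (op s)) :
    ∀ (n : ℕ) (s : Fin (n + 1) → S),
      (Function.Injective s ↔
        ((∀ i, smGen op (s i) ∣ PiFin op (smGen op) (n + 1) s) ∧
          ∀ k, (∀ i, smGen op (s i) ∣ k) → PiFin op (smGen op) (n + 1) s ∣ k)) ∧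
      (Function.Bijective (fun p : S × S => (op p.1 p.2, op p.2 p.1)) →
        Function.Injective s →
        ((∀ i : Fin (n + 1), ∃ c, PiFin op (smGen op) (n + 1) s =
            c * smGen op (OmegaFin op n (Fin.snoc (fun m : Fin n => s (i.succAbove m)) (s i)))) ∧
          ∀ k, (∀ i : Fin (n + 1), ∃ c, k =
              c * smGen op (OmegaFin op n (Fin.snoc (fun m : Fin n => s (i.succAbove m)) (s i)))) →
            ∃ c, k = c * PiFin op (smGen op) (n + 1) s)) := by
  haveI : DecidableEq S := Classical.decEq S
  intro n s
  have hinj : ∀ t : S, Function.Injective (op t) := fun t => (hlb t).1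
  have hcube : ∀ a b c : S, op (op a b) (op a c) = op (op b a) (op b c) := fun a b c => hRC a b c
  set A : List S := (List.finRange (n + 1)).map s with hA_def
  have hAlen : A.length = n + 1 := by simp [hA_def]
  have hPi : PiFin op (smGen op) (n + 1) s = RC9.mkw op (RC9.PiWr op A.reverse) := by
    unfold PiFin
    simp only [RC9.smGen_eq_mkw]
    rw [RC9.prod_map_mkw, RC9.PiFin_word]
  have hmemA : ∀ i : Fin (n + 1), s i ∈ A := by
    intro i
    rw [hA_def]
    exact List.mem_map_of_mem (List.mem_finRange i)
  constructor
  · -- Part A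
    constructor
    · -- forward
      intro hinj_s
      have hAnd : A.Nodup := (List.nodup_finRange (n + 1)).map hinj_s
      have hrnd : A.reverse.Nodup := List.nodup_reverse.mpr hAnd
      constructor
      · intro i
        rw [hPi, RC9.smGen_eq_mkw]
        exact RC9.mem_dvd_PiWr hRC hlb A.reverse hrnd (s i)
          (List.mem_reverse.mpr (hmemA i))
      · intro k hk
        obtain ⟨kw, rfl⟩ := RC9.mkw_surjective k
        rw [hPi]
        apply RC9.PiWr_dvd_of_mem_dvd hRC hlb A.reverse hrnd
        intro x hx
        obtain ⟨i, _, rfl⟩ := List.mem_map.1 (List.mem_reverse.1 hx)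
        exact hk i
    · -- backward
      rintro ⟨hdiv, hlub⟩
      intro a b hab
      by_contra hne
      have hAnotnd : ¬ A.Nodup := by
        intro hnd
        apply hne
        have ha : A[(a : ℕ)]'(by rw [hAlen]; exact a.isLt) = s a := by
          simp only [hA_def, List.getElem_map, List.getElem_finRange]
          exact congrArg s (Fin.ext rfl)
        have hb : A[(b : ℕ)]'(by rw [hAlen]; exact b.isLt) = s b := by
          simp only [hA_def, List.getElem_map, List.getElem_finRange]
          exact congrArg s (Fin.ext rfl)
        have : (a : ℕ) = (b : ℕ) := by
          exact (hnd.getElem_inj_iff).1 (ha.trans (hab.trans hb.symm))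
        exact Fin.ext this
      set d : List S := A.dedup with hd_def
      have hdnd : d.Nodup := List.nodup_dedup A
      have hdlen : d.length < n + 1 := by
        rcases Nat.lt_or_ge d.length (n + 1) with h | h
        · exact h
        · exfalso
          have hle : d.length ≤ A.length := (List.dedup_sublist A).length_le
          have heq : d.length = A.length := by omega
          have := (List.dedup_sublist A).eq_of_length heq
          exact hAnotnd (this ▸ hdnd)
      have hrdnd : d.reverse.Nodup := List.nodup_reverse.mpr hdnd
      have hdvdall : ∀ i, smGen op (s i) ∣ RC9.mkw op (RC9.PiWr op d.reverse) := by
        intro i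
        rw [RC9.smGen_eq_mkw]
        exact RC9.mem_dvd_PiWr hRC hlb d.reverse hrdnd (s i)
          (List.mem_reverse.mpr (List.mem_dedup.mpr (hmemA i)))
      have h := hlub _ hdvdall
      rw [hPi] at h
      obtain ⟨c, hc⟩ := h
      obtain ⟨w, rfl⟩ := RC9.mkw_surjective c
      rw [RC9.mkw_mul, RC9.mkw_eq_iff] at hc
      have hlen := RC9.cc_length hc
      simp only [List.length_append, RC9.PiWr_length, List.length_reverse, hAlen] at hlen
      omega
  · -- Part B
    intro hbij hinj_s
    have hAnd : A.Nodup := (List.nodup_finRange (n + 1)).map hinj_s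
    have hrnd : A.reverse.Nodup := List.nodup_reverse.mpr hAnd
    have htilde : ∀ i : Fin (n + 1),
        OmegaFin op n (Fin.snoc (fun m : Fin n => s (i.succAbove m)) (s i)) =
        RC9.Vop op (((List.finRange n).map (fun m => s (i.succAbove m))).reverse) (s i) :=
      fun i => RC9.tilde_eq_Vop s i
    constructor
    · -- B1 : tilde letters right-divide Pi
      intro i
      set E : List S := (List.finRange n).map (fun m => s (i.succAbove m)) with hE_def
      have hdec : A = E.take i.val ++ s i :: E.drop i.val := RC9.args_decomp s i
      have hperm : A.reverse.Perm (s i :: E.reverse) := by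
        refine (A.reverse_perm).trans ?_
        rw [hdec]
        refine (List.perm_middle).trans ?_
        rw [List.take_append_drop]
        exact (E.reverse_perm).symm.cons (s i)
      have heq := RC9.PiWr_perm hRC hlb A.reverse (s i :: E.reverse) hperm hrnd
      rw [hPi, heq, RC9.PiWr]
      refine ⟨RC9.mkw op (RC9.PiWr op E.reverse), ?_⟩
      rw [RC9.smGen_eq_mkw, htilde i, RC9.mkw_mul]
    · -- B2 : Pi is the left-lcm of the tilde letters
      intro k hk
      obtain ⟨kw, rfl⟩ := RC9.mkw_surjective k
      have hbs : ∀ i : Fin (n + 1), RC9.bs (RC9.thop hbij) kw.reverse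
          [RC9.Vop op (((List.finRange n).map (fun m => s (i.succAbove m))).reverse) (s i)]
            = [] := by
        intro i
        obtain ⟨c, hc⟩ := hk i
        obtain ⟨cw, rfl⟩ := RC9.mkw_surjective c
        rw [RC9.smGen_eq_mkw, htilde i, RC9.mkw_mul, RC9.mkw_eq_iff] at hc
        have h2 := RC9.cc_rev_mp hbij hc
        rw [List.reverse_append, List.reverse_singleton, List.singleton_append] at h2
        have h3 := (RC9.cc_reversible (RC9.thop_inj hlb hbij)
          (RC9.thop_cube hRC hlb hbij) h2).1
        have e : (RC9.Vop op (((List.finRange n).map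
            (fun m => s (i.succAbove m))).reverse) (s i)) :: cw.reverse =
            [RC9.Vop op (((List.finRange n).map
              (fun m => s (i.succAbove m))).reverse) (s i)] ++ cw.reverse := rfl
        rw [e, RC9.bs_append_right] at h3
        exact (List.append_eq_nil_iff.1 h3).1
      have key := RC9.lemB2 hRC hlb hbij A.reverse hrnd kw.reverse ?_
      · obtain ⟨c', hc'⟩ := (RC9.dvd_iff (RC9.thop_inj hlb hbij)
          (RC9.thop_cube hRC hlb hbij) (RC9.PiWr op A.reverse).reverse kw.reverse).2 key
        obtain ⟨w', rfl⟩ := RC9.mkw_surjective c'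
        rw [RC9.mkw_mul, RC9.mkw_eq_iff] at hc'
        have h4 := RC9.cc_rev_mpr hbij hc'
        rw [List.reverse_reverse, List.reverse_append, List.reverse_reverse] at h4
        refine ⟨RC9.mkw op w'.reverse, ?_⟩
        rw [hPi, RC9.mkw_mul]
        exact RC9.mkw_eq_iff.mpr h4
      · -- the lemB2 hypothesis
        intro r₁ x r₂ hr
        have hA2 : A = r₂.reverse ++ x :: r₁.reverse := by
          have h5 := congrArg List.reverse hr
          rw [List.reverse_reverse, List.reverse_append, List.reverse_cons,
            List.append_assoc] at h5
          simpa using h5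
        have hjlt : r₂.length < n + 1 := by
          have h6 := congrArg List.length hA2
          rw [hAlen] at h6
          simp at h6
          omega
        set i : Fin (n + 1) := ⟨r₂.length, hjlt⟩ with hi_def
        set E : List S := (List.finRange n).map (fun m => s (i.succAbove m)) with hE_def
        have hElen : E.length = n := by simp [hE_def]
        have hdec : A = E.take i.val ++ s i :: E.drop i.val := RC9.args_decomp s i
        have htlen : (E.take i.val).length = r₂.reverse.length := by
          rw [List.length_take, List.length_reverse, hElen]
          show min r₂.length n = r₂.length
          omega
        obtain ⟨hT1, hT2⟩ := List.append_inj (hdec.symm.trans hA2) htlen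
        have hsx : s i = x := by
          have := congrArg (fun l => l.head?) hT2
          simpa using this
        have hT2' : E.drop i.val = r₁.reverse := by
          have := congrArg List.tail hT2
          simpa using this
        have hEeq : E = r₂.reverse ++ r₁.reverse := by
          rw [← List.take_append_drop i.val E, hT1, hT2']
        have hErev : E.reverse = r₁ ++ r₂ := by
          rw [hEeq, List.reverse_append, List.reverse_reverse, List.reverse_reverse]
        have := hbs i
        rw [hErev, hsx] at this
        exact this
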